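/- arXiv:1407.4962 — 2 statements merged into one kernel-verified Lean document; each statement's English description precedes it below -/
import Mathlib

section
/- For every integer n ≥ 1, the number of primitive Lucas strings of length n equals Σ_{d | n} μ(n/d)·L_d, where μ is the Möbius function and the equality holds in the integers. -/
open scoped Classical

/-- Cyclic shift `α`: maps `u₁u₂⋯uₙ` to `uₙu₁⋯uₙ₋₁`. -/
def cyc {α : Type*} (u : List α) : List α := u.rotate (u.length - 1)

/-- `listPow v k` is the concatenation of `k` copies of `v`. -/
def listPow {α : Type*} (v : List α) (k : ℕ) : List α := (List.replicate k v).flatten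

/-- The period of `u`: the least `k > 0` with `cyc^[k] u = u`. -/
noncomputable def period {α : Type*} (u : List α) : ℕ := sInf {k | 0 < k ∧ cyc^[k] u = u}

/-- `u` is primitive if it is not the concatenation of `k ≥ 2` copies of a shorter string. -/
def IsPrimitive {α : Type*} (u : List α) : Prop :=
  ∀ (v : List α) (k : ℕ), 2 ≤ k → v.length < u.length → u ≠ listPow v k

/-- The dihedral orbit of `u`: `{α^j(u) : 0 ≤ j < n} ∪ {α^j(β(u)) : 0 ≤ j < n}`,
where `β` is reversal. -/
noncomputable def dihedralOrbit {α : Type*} [DecidableEq α] (u : List α) : Finset (List α) :=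
  ((Finset.range u.length).image fun j => cyc^[j] u) ∪
    ((Finset.range u.length).image fun j => cyc^[j] u.reverse)

/-- Lucas numbers: `L₀ = 2`, `L₁ = 1`, `Lₙ = Lₙ₋₁ + Lₙ₋₂`. -/
def lucas : ℕ → ℕ
  | 0 => 2
  | 1 => 1
  | n + 2 => lucas (n + 1) + lucas n

/-- All binary strings of length `n`, as a finset of boolean lists. -/
def allBool (n : ℕ) : Finset (List Bool) :=
  (Finset.univ : Finset (Fin n → Bool)).image fun f => List.ofFn f

/-- A Fibonacci string: a binary string with no two consecutive 1s. -/
def IsFibStr (l : List Bool) : Prop := l.Chain' fun a b => a = false ∨ b = false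

/-- The Fibonacci strings of length `n` (vertices of the Fibonacci cube `Γₙ`). -/
noncomputable def fibStrings (n : ℕ) : Finset (List Bool) := (allBool n).filter IsFibStr

/-- A Lucas string: a binary string with no two consecutive 1s which does not both
begin and end with 1. -/
def IsLucasStr (l : List Bool) : Prop :=
  IsFibStr l ∧ ¬(l.head? = some true ∧ l.getLast? = some true)

/-- The Lucas strings of length `n` (vertices of the Lucas cube `Λₙ`). -/
noncomputable def lucasStrings (n : ℕ) : Finset (List Bool) := (allBool n).filter IsLucasStr

/-- Two strings differ in exactly one position. -/
def DifferOne (u v : List Bool) : Prop :=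
  u.length = v.length ∧ (List.zipWith (fun a b => a != b) u v).count true = 1

/-- The edges of the Fibonacci cube `Γₙ`, as unordered pairs of vertices. -/
noncomputable def fibEdges (n : ℕ) : Finset (Finset (List Bool)) :=
  ((fibStrings n ×ˢ fibStrings n).filter fun p => DifferOne p.1 p.2).image fun p => {p.1, p.2}

/-- The edges of the Lucas cube `Λₙ`, as unordered pairs of vertices. -/
noncomputable def lucasEdges (n : ℕ) : Finset (Finset (List Bool)) :=
  ((lucasStrings n ×ˢ lucasStrings n).filter fun p => DifferOne p.1 p.2).image fun p => {p.1, p.2}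

/-- The orbit of a vertex under the reversal map `β`. -/
def revOrbit (u : List Bool) : Finset (List Bool) := {u, u.reverse}

/-- The orbit of an edge under the reversal map `β`, acting by `β({u,v}) = {β(u),β(v)}`. -/
def revEdgeOrbit (e : Finset (List Bool)) : Finset (Finset (List Bool)) :=
  {e, e.image List.reverse}

/-- The orbit of an edge under the dihedral action on strings of length `n`:
`{α^j(e) : 0 ≤ j < n} ∪ {α^j(β(e)) : 0 ≤ j < n}`. -/
noncomputable def dihedralEdgeOrbit (n : ℕ) (e : Finset (List Bool)) :
    Finset (Finset (List Bool)) :=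
  ((Finset.range n).image fun j => e.image fun u => cyc^[j] u) ∪
    ((Finset.range n).image fun j => e.image fun u => cyc^[j] u.reverse)

namespace LW
variable {α : Type*}

variable {α : Type*}

@[simp] lemma listPow_zero (v : List α) : listPow v 0 = [] := rfl

lemma listPow_succ (v : List α) (k : ℕ) : listPow v (k+1) = v ++ listPow v k := by
  simp [listPow, List.replicate_succ]

@[simp] lemma listPow_one (v : List α) : listPow v 1 = v := by simp [listPow]

@[simp] lemma listPow_length (v : List α) (k : ℕ) : (listPow v k).length = k * v.length := by
  induction k with
  | zero => simp
  | succ k ih => rw [listPow_succ, List.length_append, ih]; ring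

lemma listPow_add (v : List α) (a b : ℕ) : listPow v (a+b) = listPow v a ++ listPow v b := by
  induction a with
  | zero => simp
  | succ a ih =>
      have : a + 1 + b = (a + b) + 1 := by ring
      rw [this, listPow_succ, listPow_succ, ih, List.append_assoc]

lemma listPow_mul (v : List α) (a b : ℕ) : listPow v (a*b) = listPow (listPow v a) b := by
  induction b with
  | zero => simp
  | succ b ih =>
      rw [Nat.mul_succ, Nat.add_comm, listPow_add, listPow_succ, ih]

lemma listPow_getElem (v : List α) (hv : v ≠ []) (k i : ℕ) (h : i < (listPow v k).length) :
    (listPow v k)[i] = v[i % v.length]'(Nat.mod_lt _ (List.length_pos_iff.mpr hv)) := by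
  induction k generalizing i with
  | zero => simp at h
  | succ k ih =>
      rw [listPow_succ] at h
      simp only [listPow_succ]
      rw [List.getElem_append]
      split
      · next h' => congr 1; exact (Nat.mod_eq_of_lt h').symm
      · next h' =>
          push_neg at h'
          have hb : i - v.length < (listPow v k).length := by
            simp only [List.length_append, listPow_length] at h ⊢; omega
          rw [ih _ hb]
          have hidx : (i - v.length) % v.length = i % v.length := by
            conv_rhs => rw [← Nat.sub_add_cancel h', Nat.add_mod_right]
          simp only [hidx]

/-- `u` looks periodic with period `d` in the "residue pattern" sense. -/
def SamePattern (u : List α) (d : ℕ) : Prop :=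
  ∀ i j, (hi : i < u.length) → (hj : j < u.length) → i % d = j % d → u[i] = u[j]

lemma samePattern_of_listPow {u v : List α} {k : ℕ} (hv : v ≠ []) (h : u = listPow v k) :
    SamePattern u v.length := by
  intro i j hi hj hij
  subst h
  rw [listPow_getElem v hv k i hi, listPow_getElem v hv k j hj]
  simp only [hij]

lemma listPow_of_samePattern {u : List α} {d : ℕ} (hd : 0 < d) (hdvd : d ∣ u.length)
    (h : SamePattern u d) : u = listPow (u.take d) (u.length / d) := by
  rcases eq_or_ne u [] with rfl | hu
  · simp [listPow]
  · have hn : 0 < u.length := List.length_pos_iff.mpr hu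
    have hdn : d ≤ u.length := Nat.le_of_dvd hn hdvd
    have htl : (u.take d).length = d := by simp [Nat.min_eq_left hdn]
    have htn : u.take d ≠ [] := by
      intro hc; rw [hc] at htl; simp at htl; omega
    apply List.ext_getElem
    · simp [htl, Nat.div_mul_cancel hdvd]
    · intro i hi hi2
      have hlen : (listPow (u.take d) (u.length / d)).length = u.length := by
        simp [htl, Nat.div_mul_cancel hdvd]
      rw [listPow_getElem _ htn _ i (by omega)]
      have hmod : i % (u.take d).length < d := by rw [htl]; exact Nat.mod_lt _ hd
      have : (u.take d)[i % (u.take d).length]'(by omega) = u[i % (u.take d).length]'(by omega) :=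
        List.getElem_take ..
      rw [this]
      exact (h i (i % (u.take d).length) hi (by omega) (by rw [htl]; exact (Nat.mod_mod_of_dvd i (dvd_refl d)).symm))




lemma getElem_idx_congr (u : List α) {i j : ℕ} (h : i = j) (hi : i < u.length) :
    u[i]'hi = u[j]'(h ▸ hi) := by subst h; rfl

private lemma zsmul_invariant {n : ℕ} (f : ZMod n → α) (c : ZMod n)
    (hf : ∀ x, f (x + c) = f x) : ∀ (m : ℤ) (x), f (x + m • c) = f x := by
  intro m
  induction m using Int.induction_on with
  | zero => simp
  | succ m ih =>
      intro x
      have h : x + ((m : ℤ) + 1) • c = (x + c) + (m : ℤ) • c := by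
        rw [add_smul, one_smul]; ring
      rw [h, ih, hf]
  | pred m ih =>
      intro x
      have h : x + (-(m : ℤ) - 1) • c + c = x + (-(m : ℤ)) • c := by
        rw [sub_smul, one_smul]; ring
      rw [← hf (x + (-(m : ℤ) - 1) • c), h, ih]

lemma samePattern_gcd {u : List α} {p q : ℕ} (hp : 0 < p) (hq : 0 < q)
    (hpd : p ∣ u.length) (hqd : q ∣ u.length)
    (h1 : SamePattern u p) (h2 : SamePattern u q) : SamePattern u (Nat.gcd p q) := by
  intro i j hi hj hij
  have hn : 0 < u.length := by omega
  haveI : NeZero u.length := ⟨by omega⟩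
  set n := u.length with hndef
  set f : ZMod n → α := fun x => u[x.val]'(ZMod.val_lt x) with hf
  have step : ∀ (r : ℕ), 0 < r → r ∣ n → SamePattern u r →
      ∀ x, f (x + (r : ZMod n)) = f x := by
    intro r hr hrd hsp x
    apply hsp
    rw [ZMod.val_add, Nat.mod_mod_of_dvd _ hrd, Nat.add_mod, ZMod.val_natCast,
      Nat.mod_mod_of_dvd _ hrd, Nat.mod_self, Nat.add_zero, Nat.mod_mod_of_dvd _ (dvd_refl r)]
  have s1 := step p hp hpd h1
  have s2 := step q hq hqd h2
  set g := Nat.gcd p q with hgdef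
  have hg : 0 < g := Nat.gcd_pos_of_pos_left _ hp
  have sg : ∀ x, f (x + (g : ZMod n)) = f x := by
    intro x
    have hgcd : ((g : ℕ) : ZMod n)
        = (Nat.gcdA p q) • (p : ZMod n) + (Nat.gcdB p q) • (q : ZMod n) := by
      have hab := Nat.gcd_eq_gcd_ab p q
      have h2 := congrArg (fun z : ℤ => (z : ZMod n)) hab
      push_cast at h2
      rw [h2, zsmul_eq_mul, zsmul_eq_mul]; ring
    rw [hgcd, ← add_assoc, zsmul_invariant f _ s2, zsmul_invariant f _ s1]
  obtain ⟨c, hc⟩ := (show Nat.ModEq g i j from hij).dvd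
  have hj' : ((j : ℕ) : ZMod n) = ((i : ℕ) : ZMod n) + c • (g : ZMod n) := by
    have h2 := congrArg (fun z : ℤ => (z : ZMod n)) hc
    push_cast at h2
    rw [zsmul_eq_mul]
    linear_combination h2
  have ei : f ((i : ℕ) : ZMod n) = u[i] :=
    getElem_idx_congr u (ZMod.val_natCast_of_lt hi) _
  have ej : f ((j : ℕ) : ZMod n) = u[j] :=
    getElem_idx_congr u (ZMod.val_natCast_of_lt hj) _
  rw [← ei, ← ej, hj', zsmul_invariant f _ sg]





def rootSet (u : List α) : Set ℕ :=
  {d | 0 < d ∧ d ∣ u.length ∧ u = listPow (u.take d) (u.length / d)}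

lemma length_mem_rootSet {u : List α} (hu : u ≠ []) : u.length ∈ rootSet u := by
  refine ⟨List.length_pos_iff.mpr hu, dvd_refl _, ?_⟩
  simp [Nat.div_self (List.length_pos_iff.mpr hu), listPow, List.take_length]

lemma take_listPow (v : List α) {m k : ℕ} (h : m ≤ k) :
    (listPow v k).take (m * v.length) = listPow v m := by
  conv_lhs => rw [show k = m + (k - m) by omega, listPow_add]
  exact List.take_left' (listPow_length v m)

lemma ne_nil_of_root {u v : List α} {k : ℕ} (hu : u ≠ []) (h : u = listPow v k) : v ≠ [] := by
  rintro rfl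
  apply hu
  have : u.length = 0 := by rw [h]; simp
  exact List.length_eq_zero_iff.mp this

lemma root_mem_rootSet {u v : List α} {k : ℕ} (hu : u ≠ []) (h : u = listPow v k) :
    u.take v.length = v ∧ v.length ∈ rootSet u := by
  have hv : v ≠ [] := ne_nil_of_root hu h
  have hvl : 0 < v.length := List.length_pos_iff.mpr hv
  have hk : k ≠ 0 := by
    rintro rfl
    exact hu (by simpa [listPow] using h)
  have htake : u.take v.length = v := by
    rw [h, show k = 1 + (k - 1) by omega, listPow_add, listPow_one]
    exact List.take_left
  have hlen : u.length = k * v.length := by rw [h, listPow_length]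
  refine ⟨htake, hvl, ⟨k, by rw [hlen]; ring⟩, ?_⟩
  rw [htake, hlen, Nat.mul_div_cancel _ hvl] at *
  exact h

lemma samePattern_of_mem_rootSet {u : List α} {d : ℕ} (h : d ∈ rootSet u) :
    SamePattern u d := by
  rcases eq_or_ne u [] with rfl | hu
  · intro i j hi; simp at hi
  · obtain ⟨hd, hdvd, heq⟩ := h
    have htn : u.take d ≠ [] := by
      have : (u.take d).length = d := by
        simp [Nat.min_eq_left (Nat.le_of_dvd (List.length_pos_iff.mpr hu) hdvd)]
      intro hc; rw [hc] at this; simp at this; omega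
    have := samePattern_of_listPow htn heq
    rwa [List.length_take, Nat.min_eq_left (Nat.le_of_dvd (List.length_pos_iff.mpr hu) hdvd)] at this

lemma gcd_mem_rootSet {u : List α} {p q : ℕ} (hp : p ∈ rootSet u) (hq : q ∈ rootSet u) :
    Nat.gcd p q ∈ rootSet u := by
  obtain ⟨hp0, hpd, -⟩ := id hp
  obtain ⟨hq0, hqd, -⟩ := id hq
  have hg0 : 0 < Nat.gcd p q := Nat.gcd_pos_of_pos_left _ hp0
  have hgd : Nat.gcd p q ∣ u.length := dvd_trans (Nat.gcd_dvd_left p q) hpd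
  exact ⟨hg0, hgd, listPow_of_samePattern hg0 hgd
    (samePattern_gcd hp0 hq0 hpd hqd (samePattern_of_mem_rootSet hp)
      (samePattern_of_mem_rootSet hq))⟩

noncomputable def primRootLen (u : List α) : ℕ := sInf (rootSet u)

lemma primRootLen_mem {u : List α} (hu : u ≠ []) : primRootLen u ∈ rootSet u :=
  Nat.sInf_mem ⟨u.length, length_mem_rootSet hu⟩

lemma primRootLen_le {u : List α} {d : ℕ} (hd : d ∈ rootSet u) : primRootLen u ≤ d :=
  Nat.sInf_le hd

lemma primRoot_take_length {u : List α} (hu : u ≠ []) :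
    (u.take (primRootLen u)).length = primRootLen u := by
  obtain ⟨h0, hdvd, _⟩ := primRootLen_mem hu
  simp [Nat.min_eq_left (Nat.le_of_dvd (List.length_pos_iff.mpr hu) hdvd)]

lemma primRoot_primitive {u : List α} (hu : u ≠ []) :
    IsPrimitive (u.take (primRootLen u)) := by
  intro w k hk hlen heq
  obtain ⟨h0, hdvd, hrep⟩ := primRootLen_mem hu
  rw [primRoot_take_length hu] at hlen
  have hw : w ≠ [] := by
    rintro rfl
    have : (u.take (primRootLen u)).length = 0 := by rw [heq]; simp
    rw [primRoot_take_length hu] at this; omega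
  have hu2 : u = listPow w (k * (u.length / primRootLen u)) := by
    rw [listPow_mul, ← heq]; exact hrep
  have := primRootLen_le (root_mem_rootSet hu hu2).2
  omega

lemma eq_take_primRootLen {u v : List α} {k : ℕ} (hu : u ≠ []) (hprim : IsPrimitive v)
    (h : u = listPow v k) : v = u.take (primRootLen u) := by
  have hv : v ≠ [] := ne_nil_of_root hu h
  have hvl : 0 < v.length := List.length_pos_iff.mpr hv
  obtain ⟨htake, hmem⟩ := root_mem_rootSet hu h
  have hmemd := primRootLen_mem hu
  obtain ⟨h0, hdvd, hrep⟩ := id hmemd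
  have hle : primRootLen u ≤ v.length := primRootLen_le hmem
  have hgcd : primRootLen u ≤ Nat.gcd v.length (primRootLen u) :=
    primRootLen_le (gcd_mem_rootSet hmem hmemd)
  have hgle : Nat.gcd v.length (primRootLen u) ≤ primRootLen u :=
    Nat.le_of_dvd h0 (Nat.gcd_dvd_right _ _)
  have hddvd : primRootLen u ∣ v.length := by
    have heq : Nat.gcd v.length (primRootLen u) = primRootLen u := le_antisymm hgle hgcd
    exact heq ▸ Nat.gcd_dvd_left _ _
  obtain ⟨m, hm⟩ := hddvd
  have hvu : v.length ≤ u.length := Nat.le_of_dvd (List.length_pos_iff.mpr hu) hmem.2.1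
  have hdl : (u.take (primRootLen u)).length = primRootLen u := primRoot_take_length hu
  have hmk : m ≤ u.length / primRootLen u :=
    (Nat.le_div_iff_mul_le h0).mpr (by rw [mul_comm]; omega)
  have hkey : (listPow (u.take (primRootLen u)) (u.length / primRootLen u)).take
      (m * (u.take (primRootLen u)).length) = listPow (u.take (primRootLen u)) m :=
    take_listPow _ hmk
  rw [hdl, ← hrep] at hkey
  have hveq : v = listPow (u.take (primRootLen u)) m := by
    rw [← htake, hm, mul_comm]
    exact hkey
  rcases Nat.lt_or_ge m 2 with hm2 | hm2
  · have hm1 : m = 1 := by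
      rcases Nat.eq_zero_or_pos m with rfl | h'
      · omega
      · omega
    rw [hm1] at hveq
    simpa using hveq
  · exfalso
    have hmul : primRootLen u * 2 ≤ primRootLen u * m := Nat.mul_le_mul_left _ hm2
    exact hprim (u.take (primRootLen u)) m hm2 (by rw [hdl]; omega) hveq

lemma primitive_root_unique {u v w : List α} {k m : ℕ} (hu : u ≠ [])
    (hv : IsPrimitive v) (hw : IsPrimitive w)
    (h1 : u = listPow v k) (h2 : u = listPow w m) : v = w := by
  rw [eq_take_primRootLen hu hv h1, eq_take_primRootLen hu hw h2]

lemma mem_allBool {n : ℕ} {l : List Bool} : l ∈ allBool n ↔ l.length = n := by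
  constructor
  · rintro hl
    simp only [allBool, Finset.mem_image] at hl
    obtain ⟨f, -, rfl⟩ := hl
    simp
  · rintro rfl
    simp only [allBool, Finset.mem_image]
    exact ⟨l.get, Finset.mem_univ _, List.ofFn_get l⟩

lemma mem_fibStrings {n : ℕ} {l : List Bool} : l ∈ fibStrings n ↔ l.length = n ∧ IsFibStr l := by
  simp [fibStrings, Finset.mem_filter, mem_allBool]

lemma mem_lucasStrings {n : ℕ} {l : List Bool} :
    l ∈ lucasStrings n ↔ l.length = n ∧ IsLucasStr l := by
  simp [lucasStrings, Finset.mem_filter, mem_allBool]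

lemma listPow_ne_nil {v : List α} (hv : v ≠ []) {k : ℕ} (hk : 1 ≤ k) : listPow v k ≠ [] := by
  intro h
  have := congrArg List.length h
  simp at this
  rcases this with h1 | h2
  · omega
  · exact hv h2

lemma head?_listPow {v : List α} (hv : v ≠ []) {k : ℕ} (hk : 1 ≤ k) :
    (listPow v k).head? = v.head? := by
  rw [show k = (k-1) + 1 by omega, listPow_succ, List.head?_append,
    List.head?_eq_head hv]
  rfl

lemma getLast?_listPow {v : List α} (hv : v ≠ []) {k : ℕ} (hk : 1 ≤ k) :
    (listPow v k).getLast? = v.getLast? := by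
  induction k with
  | zero => omega
  | succ k ih =>
      rcases Nat.eq_zero_or_pos k with rfl | hk'
      · simp
      · rw [listPow_succ, List.getLast?_append, ih hk', List.getLast?_eq_getLast hv]
        rfl

lemma chain'_replicate_iff {β : Type*} {S : β → β → Prop} (a : β) (k : ℕ) :
    List.Chain' S (List.replicate k a) ↔ k ≤ 1 ∨ S a a := by
  induction k with
  | zero => simp [List.Chain', List.isChain_nil]
  | succ k ih =>
      cases k with
      | zero => simp [List.Chain', List.isChain_singleton]
      | succ k =>
          simp only [List.Chain'] at ih ⊢
          rw [List.replicate_succ, List.replicate_succ, List.isChain_cons_cons,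
            ← List.replicate_succ]
          rw [ih]
          constructor
          · rintro ⟨h1, _⟩; right; exact h1
          · rintro (h | h)
            · omega
            · exact ⟨h, Or.inr h⟩

lemma isFibStr_listPow_iff {v : List Bool} (hv : v ≠ []) {k : ℕ} (hk : 1 ≤ k) :
    IsFibStr (listPow v k) ↔ IsFibStr v ∧
      (k ≤ 1 ∨ ∀ x ∈ v.getLast?, ∀ y ∈ v.head?, (x = false ∨ y = false)) := by
  unfold IsFibStr
  have hr := chain'_replicate_iff (S := fun l₁ l₂ : List Bool =>
    ∀ x ∈ l₁.getLast?, ∀ y ∈ l₂.head?, (x = false ∨ y = false)) v k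
  simp only [List.Chain'] at hr ⊢
  rw [show listPow v k = (List.replicate k v).flatten from rfl,
    List.isChain_flatten (by rw [List.mem_replicate]; rintro ⟨-, h⟩; exact hv h.symm)]
  rw [hr]
  constructor
  · rintro ⟨h1, h2⟩
    exact ⟨h1 v (by simp; omega), h2⟩
  · rintro ⟨h1, h2⟩
    refine ⟨?_, h2⟩
    intro l hl
    rw [List.eq_of_mem_replicate hl]
    exact h1

lemma bdry_iff {u : List Bool} (hu : u ≠ []) :
    (¬(u.head? = some true ∧ u.getLast? = some true)) ↔
      ∀ x ∈ u.getLast?, ∀ y ∈ u.head?, (x = false ∨ y = false) := by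
  rw [List.head?_eq_head hu, List.getLast?_eq_getLast hu]
  cases hh : u.head hu <;> cases hl : u.getLast hu <;> simp

lemma isLucasStr_listPow_iff {v : List Bool} (hv : v ≠ []) {k : ℕ} (hk : 1 ≤ k) :
    IsLucasStr (listPow v k) ↔ IsLucasStr v := by
  unfold IsLucasStr
  rw [isFibStr_listPow_iff hv hk,
    bdry_iff (listPow_ne_nil hv hk), bdry_iff hv,
    head?_listPow hv hk, getLast?_listPow hv hk]
  constructor
  · rintro ⟨⟨h1, _⟩, h3⟩
    exact ⟨h1, h3⟩
  · rintro ⟨h1, h2⟩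
    exact ⟨⟨h1, Or.inr h2⟩, h2⟩

lemma card_fib0 : (fibStrings 0).card = 1 := by
  have : fibStrings 0 = {[]} := by
    ext l
    simp [mem_fibStrings, List.length_eq_zero_iff]
    rintro rfl
    simp [IsFibStr, List.Chain', List.isChain_nil]
  rw [this]; rfl

lemma card_fib1 : (fibStrings 1).card = 2 := by
  have : fibStrings 1 = {[false], [true]} := by
    ext l
    rw [mem_fibStrings, List.length_eq_one_iff]
    constructor
    · rintro ⟨⟨a, rfl⟩, -⟩
      cases a <;> simp
    · intro h
      rcases Finset.mem_insert.mp h with rfl | h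
      · exact ⟨⟨false, rfl⟩, by simp [IsFibStr, List.Chain', List.isChain_singleton]⟩
      · rw [Finset.mem_singleton] at h; subst h
        exact ⟨⟨true, rfl⟩, by simp [IsFibStr, List.Chain', List.isChain_singleton]⟩
  rw [this]
  rfl

lemma card_fib_rec (n : ℕ) :
    (fibStrings (n+2)).card = (fibStrings (n+1)).card + (fibStrings n).card := by
  have hset : fibStrings (n+2) =
      (fibStrings (n+1)).image (fun w => false :: w) ∪
        (fibStrings n).image (fun w => true :: false :: w) := by
    ext l
    rw [mem_fibStrings]
    constructor
    · rintro ⟨hlen, hfib⟩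
      match l, hlen with
      | a :: b :: t, hlen =>
        cases a
        · apply Finset.mem_union_left
          refine Finset.mem_image.mpr ⟨b :: t, mem_fibStrings.mpr ⟨by simpa using hlen, ?_⟩, rfl⟩
          exact hfib.tail
        · apply Finset.mem_union_right
          have hrel := (List.isChain_cons_cons.mp hfib).1
          have hb : b = false := by simpa using hrel
          subst hb
          refine Finset.mem_image.mpr ⟨t, mem_fibStrings.mpr ⟨by simpa using hlen, ?_⟩, rfl⟩
          exact hfib.tail.tail
    · intro h
      rcases Finset.mem_union.mp h with h | h
      · obtain ⟨w, hw, rfl⟩ := Finset.mem_image.mp h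
        obtain ⟨hl, hf⟩ := mem_fibStrings.mp hw
        refine ⟨by simp [hl], ?_⟩
        exact List.isChain_cons.mpr ⟨fun b _ => Or.inl rfl, hf⟩
      · obtain ⟨w, hw, rfl⟩ := Finset.mem_image.mp h
        obtain ⟨hl, hf⟩ := mem_fibStrings.mp hw
        refine ⟨by simp [hl], ?_⟩
        refine List.isChain_cons_cons.mpr ⟨Or.inr rfl, ?_⟩
        exact List.isChain_cons.mpr ⟨fun b _ => Or.inl rfl, hf⟩
  rw [hset, Finset.card_union_of_disjoint, Finset.card_image_of_injective _ (List.cons_injective),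
    Finset.card_image_of_injective]
  · intro x y hxy
    simpa using hxy
  · rw [Finset.disjoint_left]
    rintro a ha hb
    obtain ⟨w, -, rfl⟩ := Finset.mem_image.mp ha
    obtain ⟨w', -, h⟩ := Finset.mem_image.mp hb
    simp at h

lemma card_lucas1 : (lucasStrings 1).card = 1 := by
  have : lucasStrings 1 = {[false]} := by
    ext l
    rw [mem_lucasStrings, List.length_eq_one_iff]
    constructor
    · rintro ⟨⟨a, rfl⟩, -, hb⟩
      cases a
      · simp
      · exfalso; exact hb (by simp)
    · intro h
      rw [Finset.mem_singleton] at h; subst h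
      exact ⟨⟨false, rfl⟩, by simp [IsFibStr, List.Chain', List.isChain_singleton, List.isChain_cons_cons], by simp⟩
  rw [this]; rfl

lemma card_lucas2 : (lucasStrings 2).card = 3 := by
  have : lucasStrings 2 = {[false, false], [false, true], [true, false]} := by
    ext l
    rw [mem_lucasStrings]
    constructor
    · rintro ⟨hlen, hfib, hb⟩
      match l, hlen with
      | [a, b], _ =>
        cases a <;> cases b <;> simp_all [IsFibStr, List.Chain']
    · intro h
      fin_cases h <;>
        refine ⟨rfl, by simp [IsFibStr, List.Chain', List.isChain_singleton, List.isChain_cons_cons], by simp⟩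
  rw [this]
  rfl

lemma card_lucas_rec (n : ℕ) :
    (lucasStrings (n+3)).card = (fibStrings (n+2)).card + (fibStrings n).card := by
  have hset : lucasStrings (n+3) =
      (fibStrings (n+2)).image (fun w => false :: w) ∪
        (fibStrings n).image (fun w => true :: false :: (w ++ [false])) := by
    ext l
    rw [mem_lucasStrings]
    constructor
    · rintro ⟨hlen, hfib, hbd⟩
      match l, hlen with
      | a :: b :: t, hlen =>
        cases a
        · apply Finset.mem_union_left
          exact Finset.mem_image.mpr
            ⟨b :: t, mem_fibStrings.mpr ⟨by simpa using hlen, hfib.tail⟩, rfl⟩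
        · apply Finset.mem_union_right
          have hb : b = false := by simpa using (List.isChain_cons_cons.mp hfib).1
          subst hb
          have ht : t ≠ [] := by
            intro h; subst h; simp at hlen
          have hgl : (true :: false :: t).getLast? = some (t.getLast ht) := by
            rw [List.getLast?_cons_cons, List.getLast?_eq_getLast (by simp),
              List.getLast_cons ht]
          have hlast : t.getLast ht = false := by
            by_contra h
            have h' : t.getLast ht = true := by
              cases hx : t.getLast ht
              · exact absurd hx h
              · rfl
            exact hbd ⟨rfl, by rw [hgl, h']⟩
          have hw : t.dropLast ++ [false] = t := by
            conv_rhs => rw [← List.dropLast_append_getLast ht, hlast]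
          have hchain : IsFibStr t.dropLast := by
            have h1 : IsFibStr t := hfib.tail.tail
            rw [← hw] at h1
            exact (List.isChain_append.mp h1).1
          refine Finset.mem_image.mpr ⟨t.dropLast, mem_fibStrings.mpr ⟨?_, hchain⟩, ?_⟩
          · have h1 := congrArg List.length hw
            have h2 := hlen
            simp at h1 h2 ⊢
            omega
          · rw [hw]
    · intro h
      rcases Finset.mem_union.mp h with h | h
      · obtain ⟨w, hw, rfl⟩ := Finset.mem_image.mp h
        obtain ⟨hl, hf⟩ := mem_fibStrings.mp hw
        refine ⟨by simp [hl], ?_, by simp⟩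
        exact List.isChain_cons.mpr ⟨fun b _ => Or.inl rfl, hf⟩
      · obtain ⟨w, hw, rfl⟩ := Finset.mem_image.mp h
        obtain ⟨hl, hf⟩ := mem_fibStrings.mp hw
        refine ⟨by simp [hl], ?_, ?_⟩
        · refine List.isChain_cons_cons.mpr ⟨Or.inr rfl, ?_⟩
          refine List.isChain_cons.mpr ⟨fun b _ => Or.inl rfl, ?_⟩
          refine List.isChain_append.mpr ⟨hf, by simp, ?_⟩
          intro x _ y hy
          simp at hy
          exact Or.inr hy
        · have : (true :: false :: (w ++ [false])).getLast? = some false := by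
            rw [show true :: false :: (w ++ [false]) = (true :: false :: w) ++ [false] by simp]
            exact List.getLast?_concat
          rintro ⟨-, hc⟩
          rw [this] at hc
          simp at hc
  rw [hset, Finset.card_union_of_disjoint, Finset.card_image_of_injective _ (List.cons_injective),
    Finset.card_image_of_injective]
  · intro x y hxy
    simpa using hxy
  · rw [Finset.disjoint_left]
    rintro a ha hb
    obtain ⟨w, -, rfl⟩ := Finset.mem_image.mp ha
    obtain ⟨w', -, h⟩ := Finset.mem_image.mp hb
    simp at h

lemma card_fib2 : (fibStrings 2).card = 3 := by
  rw [card_fib_rec, card_fib1, card_fib0]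

lemma card_fib3 : (fibStrings 3).card = 5 := by
  rw [card_fib_rec, card_fib2, card_fib1]

lemma lucas_card_fib : ∀ n : ℕ, lucas (n+3) = (fibStrings (n+2)).card + (fibStrings n).card := by
  intro n
  induction n using Nat.strong_induction_on with
  | _ n ih =>
    match n with
    | 0 => simp [lucas, card_fib2, card_fib0]
    | 1 => simp [lucas, card_fib3, card_fib1]
    | (m+2) =>
        have h1 := ih m (by omega)
        have h2 := ih (m+1) (by omega)
        have : lucas (m + 2 + 3) = lucas (m + 1 + 3) + lucas (m + 3) := rfl
        rw [this, h1, h2, card_fib_rec (m+2), card_fib_rec m]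
        ring

lemma card_lucasStrings : ∀ n : ℕ, 1 ≤ n → (lucasStrings n).card = lucas n := by
  intro n hn
  match n with
  | 1 => rw [card_lucas1]; rfl
  | 2 => rw [card_lucas2]; rfl
  | (m+3) => rw [card_lucas_rec, lucas_card_fib]




lemma take_length_listPow {v : List α} {k : ℕ} (hk : 1 ≤ k) :
    (listPow v k).take v.length = v := by
  rw [show k = 1 + (k-1) by omega, listPow_add, listPow_one]
  exact List.take_left

lemma sum_primitive (n : ℕ) (hn : 1 ≤ n) :
    ∑ d ∈ n.divisors, ((lucasStrings d).filter fun u => IsPrimitive u).card = lucas n := by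
  classical
  have hmap : ∀ d ∈ n.divisors, ∀ v ∈ (lucasStrings d).filter fun u => IsPrimitive u,
      listPow v (n/d) ∈ lucasStrings n ∧ v ≠ [] ∧ 1 ≤ n / d ∧ v.length = d := by
    intro d hd v hv
    obtain ⟨hdvd, hn0⟩ := Nat.mem_divisors.mp hd
    have hd0 : 0 < d := Nat.pos_of_dvd_of_pos hdvd (by omega)
    obtain ⟨hv1, hv2⟩ := Finset.mem_filter.mp hv
    obtain ⟨hvl, hvluc⟩ := mem_lucasStrings.mp hv1
    have hvne : v ≠ [] := by
      intro h; rw [h] at hvl; simp at hvl; omega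
    have hk : 1 ≤ n / d := Nat.le_div_iff_mul_le hd0 |>.mpr (by
      simpa using Nat.le_of_dvd (by omega) hdvd)
    refine ⟨mem_lucasStrings.mpr ⟨?_, (isLucasStr_listPow_iff hvne hk).mpr hvluc⟩, hvne, hk, hvl⟩
    rw [listPow_length, hvl, Nat.div_mul_cancel hdvd]
  have hset : lucasStrings n = n.divisors.biUnion
      (fun d => ((lucasStrings d).filter fun u => IsPrimitive u).image
        (fun v => listPow v (n/d))) := by
    ext u
    constructor
    · intro hu
      obtain ⟨hul, huluc⟩ := mem_lucasStrings.mp hu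
      have hune : u ≠ [] := by
        intro h; rw [h] at hul; simp at hul; omega
      obtain ⟨hd0, hdvd, hrep⟩ := primRootLen_mem hune
      set d := primRootLen u with hdd
      rw [hul] at hdvd hrep
      have hk : 1 ≤ n / d := Nat.le_div_iff_mul_le hd0 |>.mpr (by
        simpa using Nat.le_of_dvd (by omega) hdvd)
      have hrl : (u.take d).length = d := primRoot_take_length hune
      have hrne : u.take d ≠ [] := by
        intro h; rw [h] at hrl; simp at hrl; omega
      apply Finset.mem_biUnion.mpr
      refine ⟨d, Nat.mem_divisors.mpr ⟨hdvd, by omega⟩, Finset.mem_image.mpr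
        ⟨u.take d, Finset.mem_filter.mpr ⟨mem_lucasStrings.mpr ⟨hrl, ?_⟩,
          primRoot_primitive hune⟩, hrep.symm⟩⟩
      exact (isLucasStr_listPow_iff hrne hk).mp (hrep ▸ huluc)
    · intro hu
      obtain ⟨d, hd, hu'⟩ := Finset.mem_biUnion.mp hu
      obtain ⟨v, hv, rfl⟩ := Finset.mem_image.mp hu'
      exact (hmap d hd v hv).1
  rw [← card_lucasStrings n hn, hset, Finset.card_biUnion]
  · apply Finset.sum_congr rfl
    intro d hd
    refine (Finset.card_image_of_injOn ?_).symm
    intro v hv w hw h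
    obtain ⟨-, hvne, hk, hvl⟩ := hmap d hd v hv
    obtain ⟨-, -, -, hwl⟩ := hmap d hd w hw
    dsimp only at h
    have h1 : v = (listPow v (n/d)).take v.length := (take_length_listPow hk).symm
    rw [h1, h, show v.length = w.length from hvl.trans hwl.symm]
    exact take_length_listPow hk
  · intro d1 hd1 d2 hd2 hne
    rw [Function.onFun, Finset.disjoint_left]
    rintro u hu1 hu2
    obtain ⟨v, hv, hveq⟩ := Finset.mem_image.mp hu1
    obtain ⟨w, hw, hweq⟩ := Finset.mem_image.mp hu2
    obtain ⟨humem, hvne, hk1, hvl⟩ := hmap d1 hd1 v hv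
    subst hveq
    have hune : listPow v (n / d1) ≠ [] := by
      intro h
      obtain ⟨hl, -⟩ := mem_lucasStrings.mp humem
      rw [h] at hl; simp at hl; omega
    obtain ⟨-, -, -, hwl⟩ := hmap d2 hd2 w hw
    have hvp : IsPrimitive v := (Finset.mem_filter.mp hv).2
    have hwp : IsPrimitive w := (Finset.mem_filter.mp hw).2
    have := primitive_root_unique hune hvp hwp rfl hweq.symm
    exact hne (by rw [← hvl, this, hwl])


end LW

/-- For `n ≥ 1`, the number of primitive Lucas strings of length `n` equals
`Σ_{d ∣ n} μ(n/d)·L_d` (in the integers). -/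
theorem count_primitive_lucas (n : ℕ) (hn : 1 ≤ n) :
    ((((lucasStrings n).filter fun u => IsPrimitive u).card : ℤ))
      = ∑ d ∈ n.divisors, ArithmeticFunction.moebius (n / d) * (lucas d : ℤ) := by
  classical
  have key : ∀ m : ℕ, m > 0 →
      ∑ d ∈ m.divisors, (((lucasStrings d).filter fun u => IsPrimitive u).card : ℤ)
        = ((lucas m : ℕ) : ℤ) := by
    intro m hm
    rw [← Nat.cast_sum]
    exact_mod_cast congrArg (Nat.cast : ℕ → ℤ) (LW.sum_primitive m hm)
  have h2 := (ArithmeticFunction.sum_eq_iff_sum_smul_moebius_eq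
    (f := fun d => (((lucasStrings d).filter fun u => IsPrimitive u).card : ℤ))
    (g := fun m => ((lucas m : ℕ) : ℤ))).mp key n (by omega)
  rw [← h2]
  rw [← Nat.sum_divisorsAntidiagonal' (f := fun i j =>
    (ArithmeticFunction.moebius i : ℤ) * (lucas j : ℤ))]
  apply Finset.sum_congr rfl
  intro x hx
  rw [zsmul_eq_mul]
  norm_cast
end

section
/- For every integer n ≥ 1, every orbit of the set of edges of the Lucas cube Λ_n under the dihedral action generated by α and β has size n or size 2n; moreover, both sizes n and 2n occur as edge orbit sizes if and only if n ≥ 5. -/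
open scoped Classical

-- ===== auxiliary lemmas =====

theorem cyc_iter {α : Type*} (j : ℕ) (u : List α) :
    cyc^[j] u = u.rotate (j * (u.length - 1)) := by
  induction j with
  | zero => simp
  | succ j ih =>
    rw [Function.iterate_succ_apply', ih, cyc, List.rotate_rotate, List.length_rotate]
    ring_nf

theorem cyc_iter_length {α : Type*} (j : ℕ) (u : List α) :
    (cyc^[j] u).length = u.length := by
  rw [cyc_iter, List.length_rotate]

theorem cyc_iter_mod {α : Type*} {n : ℕ} (j : ℕ) (u : List α)
    (h : u.length = n) : cyc^[j] u = cyc^[j % n] u := by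
  rw [cyc_iter, cyc_iter, h, ← List.rotate_mod, ← List.rotate_mod u (j % n * (n-1)), h,
    Nat.mul_mod, Nat.mul_mod (j % n)]
  simp

theorem cyc_iter_n {α : Type*} {n : ℕ} (u : List α)
    (h : u.length = n) : cyc^[n] u = u := by
  rw [cyc_iter, h, ← List.rotate_mod, h, Nat.mul_mod_right, List.rotate_zero]

/-- A list with exactly one `true`, fixed by rotation `r`, forces `length ∣ r`. -/
theorem rotate_single_true {l : List Bool} {r : ℕ} (h1 : l.count true = 1)
    (h2 : l.rotate r = l) : l.length ∣ r := by
  have hmem : true ∈ l := by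
    rw [← List.count_pos_iff]; omega
  obtain ⟨i, hi⟩ := List.get_of_mem hmem
  have hn : 0 < l.length := List.length_pos_iff.mpr (List.ne_nil_of_mem hmem)
  have huniq : ∀ (i j : Fin l.length), l.get i = true → l.get j = true → (i:ℕ) = j := by
    intro i j hi hj
    by_contra hne
    have : l.Duplicate true := by
      rw [List.duplicate_iff_exists_distinct_get]
      rcases lt_or_gt_of_ne (fun h : (i:ℕ)=(j:ℕ) => hne h) with h | h
      · exact ⟨i, j, by exact_mod_cast h, hi.symm, hj.symm⟩
      · exact ⟨j, i, by exact_mod_cast h, hj.symm, hi.symm⟩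
    rw [List.duplicate_iff_two_le_count] at this
    omega
  have hlen : ((i:ℕ) + r) % l.length < l.length := Nat.mod_lt _ hn
  have key' : ∀ m : ℕ, m < l.length → l[m]? = l[(m + r) % l.length]? := by
    intro m hm
    conv_lhs => rw [← h2]
    exact List.getElem?_rotate hm
  have key := key' (i:ℕ) i.2
  have hig : l[(i:ℕ)]? = some true := by
    rw [List.getElem?_eq_getElem i.2, ← List.get_eq_getElem, hi]
  rw [hig, List.getElem?_eq_getElem hlen] at key
  have h3 : l.get ⟨((i:ℕ) + r) % l.length, hlen⟩ = true := by
    rw [List.get_eq_getElem]; exact (Option.some_injective _ key).symm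
  have heq : (i:ℕ) = ((i:ℕ) + r) % l.length := huniq _ _ hi h3
  have hdm := Nat.div_add_mod ((i:ℕ) + r) l.length
  exact ⟨((i:ℕ) + r) / l.length, by omega⟩

/-- zipWith-bne count zero implies equal lists. -/
theorem zip_count_zero : ∀ {u v : List Bool}, u.length = v.length →
    (List.zipWith (fun a b => a != b) u v).count true = 0 → u = v := by
  intro u
  induction u with
  | nil => intro v h _; exact (List.length_eq_zero_iff.mp h.symm).symm
  | cons a u ih =>
    intro v h hc
    cases v with
    | nil => simp at h
    | cons b v =>
      simp only [List.length_cons] at h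
      simp only [List.zipWith_cons_cons, List.count_cons] at hc
      have hab : (a != b) = false := by
        by_contra hcontra
        rw [Bool.not_eq_false] at hcontra
        rw [hcontra] at hc; simp at hc
      rw [hab] at hc
      simp at hc
      have hA : a = b := by cases a <;> cases b <;> simp_all
      rw [hA, ih (v:=v) (by omega) hc]

theorem differOne_count : ∀ {u v : List Bool}, u.length = v.length →
    (List.zipWith (fun a b => a != b) u v).count true = 1 →
    u.count true + 1 = v.count true ∨ v.count true + 1 = u.count true := by
  intro u
  induction u with
  | nil => intro v h hc; rw [(List.length_eq_zero_iff.mp h.symm)] at hc; simp at hc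
  | cons a u ih =>
    intro v h hc
    cases v with
    | nil => simp at h
    | cons b v =>
      simp only [List.length_cons] at h
      simp only [List.zipWith_cons_cons, List.count_cons] at hc
      by_cases hab : a = b
      · subst hab
        simp only [bne_self_eq_false, Bool.false_eq_true, if_neg, reduceCtorEq,
          add_zero] at hc
        have := ih (v := v) (by omega) hc
        simp only [List.count_cons]
        rcases this with h1 | h1
        · left; omega
        · right; omega
      · have hT : (a != b) = true := by cases a <;> cases b <;> simp_all
        rw [hT] at hc
        simp at hc
        have h0 : u = v := zip_count_zero (by omega) (by omega)
        subst h0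
        simp only [List.count_cons]
        cases a <;> cases b <;> simp_all

theorem differOne_count_ne {u v : List Bool} (h : DifferOne u v) :
    u.count true ≠ v.count true := by
  rcases differOne_count h.1 h.2 with h1 | h1 <;> omega

theorem count_cyc_iter (j : ℕ) (u : List Bool) :
    (cyc^[j] u).count true = u.count true := by
  rw [cyc_iter]; exact (List.rotate_perm _ _).count_eq _

theorem pair_eq_split {a b c d : List Bool} (h : ({a, b} : Finset (List Bool)) = {c, d})
    (hac : a.count true = c.count true) (hbd : b.count true = d.count true)
    (hab : a.count true ≠ b.count true) : a = c ∧ b = d := by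
  have ha : a ∈ ({c, d} : Finset (List Bool)) := h ▸ Finset.mem_insert_self a {b}
  have hb : b ∈ ({c, d} : Finset (List Bool)) := h ▸ Finset.mem_insert_of_mem
    (Finset.mem_singleton_self b)
  simp only [Finset.mem_insert, Finset.mem_singleton] at ha hb
  rcases ha with ha | ha
  · refine ⟨ha, ?_⟩
    rcases hb with hb | hb
    · exfalso; apply hab; rw [ha, hb]
    · exact hb
  · exact absurd (by rw [ha, ← hbd]) hab

/-- the cyclic orbit of an edge -/
noncomputable def cycOrbit (n : ℕ) (e : Finset (List Bool)) : Finset (Finset (List Bool)) :=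
  (Finset.range n).image fun j => e.image fun u => cyc^[j] u

theorem image_pair (f : List Bool → List Bool) (u v : List Bool) :
    ({u, v} : Finset (List Bool)).image f = {f u, f v} := by
  simp [Finset.image_insert, Finset.image_singleton]

theorem dihedralEdgeOrbit_eq (n : ℕ) (e : Finset (List Bool)) :
    dihedralEdgeOrbit n e = cycOrbit n e ∪ cycOrbit n (e.image List.reverse) := by
  rw [dihedralEdgeOrbit, cycOrbit, cycOrbit]
  congr 1
  apply Finset.image_congr
  intro j _
  simp only [Finset.image_image]
  rfl

theorem cycOrbit_card {n : ℕ} (hn : 0 < n) {u v : List Bool} (hu : u.length = n)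
    (hv : v.length = n) (hd : DifferOne u v) :
    (cycOrbit n ({u, v} : Finset (List Bool))).card = n := by
  rw [cycOrbit]
  rw [Finset.card_image_of_injOn, Finset.card_range]
  intro j hj k hk hjk
  simp only [Finset.coe_range, Set.mem_Iio] at hj hk
  -- reduce to a symmetric claim
  have main : ∀ j k : ℕ, j ≤ k → k < n →
      ({u, v} : Finset (List Bool)).image (fun w => cyc^[j] w)
        = ({u, v} : Finset (List Bool)).image (fun w => cyc^[k] w) → j = k := by
    intro j k hjk hk heq
    rw [image_pair, image_pair] at heq
    have hsp := pair_eq_split heq (by rw [count_cyc_iter, count_cyc_iter])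
      (by rw [count_cyc_iter, count_cyc_iter])
      (by rw [count_cyc_iter, count_cyc_iter]; exact differOne_count_ne hd)
    have hru : u.rotate (j * (n-1)) = u.rotate (k * (n-1)) := by
      have := hsp.1
      rw [cyc_iter, cyc_iter, hu] at this
      exact this
    have hrv : v.rotate (j * (n-1)) = v.rotate (k * (n-1)) := by
      have := hsp.2
      rw [cyc_iter, cyc_iter, hv] at this
      exact this
    set a := j * (n-1) with ha
    set b := k * (n-1) with hb
    have hba : a ≤ b := Nat.mul_le_mul_right _ hjk
    have keyrot : ∀ w : List Bool, w.length = n → w.rotate a = w.rotate b →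
        w.rotate ((b - a) % n) = w := by
      intro w hw hr
      have hmul : a * n = a * (n-1) + a := by
        rw [← Nat.mul_succ]
        congr 1
        omega
      have h1 : w.rotate (a + a * (n-1)) = w := by
        rw [← List.rotate_mod, hw]
        have : a + a * (n-1) = a * n := by omega
        rw [this, Nat.mul_mod_left, List.rotate_zero]
      have h2 : w.rotate (b + a * (n-1)) = w.rotate (a + a * (n-1)) := by
        rw [← List.rotate_rotate, ← List.rotate_rotate, hr]
      have h3 : b + a * (n-1) = (b - a) + a * n := by omega
      rw [h3, ← List.rotate_mod, hw, Nat.add_mul_mod_self_right] at h2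
      rw [h1] at h2
      exact h2
    have hrvu := keyrot u hu hru
    have hrvv := keyrot v hv hrv
    -- the difference list
    set D := List.zipWith (fun a b => a != b) u v with hD
    have hDlen : D.length = n := by rw [hD, List.length_zipWith, hu, hv, min_self]
    have hDrot : D.rotate ((b - a) % n) = D := by
      rw [hD, List.zipWith_rotate_distrib _ _ _ _ (by rw [hu, hv]), hrvu, hrvv]
    have hdvd := rotate_single_true hd.2 hDrot
    rw [hDlen] at hdvd
    have hmodlt : (b - a) % n < n := Nat.mod_lt _ hn
    have hz : (b - a) % n = 0 := by
      rcases hdvd with ⟨c, hc⟩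
      rcases Nat.eq_zero_or_pos c with h | h
      · rw [h, Nat.mul_zero] at hc; omega
      · have := Nat.le_mul_of_pos_right n h
        omega
    have : n ∣ b - a := Nat.dvd_of_mod_eq_zero hz
    have hsub : b - a = (k - j) * (n - 1) := by
      rw [ha, hb, ← Nat.sub_mul]
    rw [hsub] at this
    have hcop : Nat.Coprime n (n - 1) := by
      rcases Nat.exists_eq_add_of_lt hn with ⟨m, hm⟩
      have : n - 1 = m := by omega
      rw [this, hm]
      simpa using (Nat.coprime_succ_self m).symm
    have hdj : n ∣ k - j := hcop.dvd_of_dvd_mul_right this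
    rcases hdj with ⟨c2, hc2⟩
    rcases Nat.eq_zero_or_pos c2 with h2 | h2
    · rw [h2, Nat.mul_zero] at hc2; omega
    · have := Nat.le_mul_of_pos_right n h2
      omega
  rcases le_or_gt j k with h | h
  · exact main j k h hk hjk
  · exact (main k j (le_of_lt h) hj hjk.symm).symm

theorem mem_cycOrbit_self {n : ℕ} (hn : 0 < n) (e : Finset (List Bool)) :
    e ∈ cycOrbit n e := by
  rw [cycOrbit, Finset.mem_image]
  exact ⟨0, Finset.mem_range.mpr hn, by simp⟩

theorem cycOrbit_lengths {n : ℕ} {e x : Finset (List Bool)}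
    (hlen : ∀ u ∈ e, u.length = n) (hx : x ∈ cycOrbit n e) :
    ∀ u ∈ x, u.length = n := by
  rw [cycOrbit, Finset.mem_image] at hx
  obtain ⟨i, _, hi⟩ := hx
  intro w hw
  rw [← hi, Finset.mem_image] at hw
  obtain ⟨w', hw', rfl⟩ := hw
  rw [cyc_iter_length]
  exact hlen w' hw'

theorem cycOrbit_subset_of_mem {n : ℕ} (hn : 0 < n) {e x : Finset (List Bool)}
    (hlen : ∀ u ∈ e, u.length = n) (hx : x ∈ cycOrbit n e) :
    cycOrbit n x ⊆ cycOrbit n e := by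
  rw [cycOrbit, Finset.mem_image] at hx
  obtain ⟨i, hi, rfl⟩ := hx
  intro y hy
  rw [cycOrbit, Finset.mem_image] at hy
  obtain ⟨j, hj, rfl⟩ := hy
  rw [cycOrbit, Finset.mem_image]
  refine ⟨(j + i) % n, Finset.mem_range.mpr (Nat.mod_lt _ hn), ?_⟩
  rw [Finset.image_image]
  apply Finset.image_congr
  intro w hw
  simp only [Function.comp_apply]
  rw [← Function.iterate_add_apply, ← cyc_iter_mod _ _ (hlen w hw)]

theorem mem_cycOrbit_of_mem {n : ℕ} (hn : 0 < n) {e x : Finset (List Bool)}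
    (hlen : ∀ u ∈ e, u.length = n) (hx : x ∈ cycOrbit n e) :
    e ∈ cycOrbit n x := by
  rw [cycOrbit, Finset.mem_image] at hx
  obtain ⟨i, hi, rfl⟩ := hx
  rw [Finset.mem_range] at hi
  rw [cycOrbit, Finset.mem_image]
  refine ⟨(n - i) % n, Finset.mem_range.mpr (Nat.mod_lt _ hn), ?_⟩
  rw [Finset.image_image]
  have : ∀ w ∈ e, (fun u => cyc^[(n - i) % n] u) ((fun u => cyc^[i] u) w) = id w := by
    intro w hw
    simp only [Function.comp_apply, id_eq]
    rw [← Function.iterate_add_apply, cyc_iter_mod _ _ (hlen w hw)]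
    have h1 : ((n - i) % n + i) % n = 0 := by
      rcases Nat.eq_zero_or_pos i with h0 | h0
      · subst h0; simp
      · have h2 : (n - i) % n = n - i := Nat.mod_eq_of_lt (by omega)
        rw [h2]
        have h3 : n - i + i = n := by omega
        rw [h3, Nat.mod_self]
    rw [h1]
    simp
  calc e.image ((fun u => cyc^[(n - i) % n] u) ∘ (fun u => cyc^[i] u))
      = e.image id := Finset.image_congr this
    _ = e := Finset.image_id

theorem cycOrbit_eq_of_mem {n : ℕ} (hn : 0 < n) {e x : Finset (List Bool)}
    (hlen : ∀ u ∈ e, u.length = n) (hx : x ∈ cycOrbit n e) :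
    cycOrbit n x = cycOrbit n e := by
  apply Finset.Subset.antisymm (cycOrbit_subset_of_mem hn hlen hx)
  exact cycOrbit_subset_of_mem hn (cycOrbit_lengths hlen hx) (mem_cycOrbit_of_mem hn hlen hx)


theorem rotate_cancel {n : ℕ} (hn : 0 < n) {w : List Bool} (hw : w.length = n)
    {a b : ℕ} (hba : a ≤ b) (hr : w.rotate a = w.rotate b) :
    w.rotate ((b - a) % n) = w := by
  have hmul : a * n = a * (n-1) + a := by
    rw [← Nat.mul_succ]
    congr 1
    omega
  have h1 : w.rotate (a + a * (n-1)) = w := by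
    rw [← List.rotate_mod, hw]
    have : a + a * (n-1) = a * n := by omega
    rw [this, Nat.mul_mod_left, List.rotate_zero]
  have h2 : w.rotate (b + a * (n-1)) = w.rotate (a + a * (n-1)) := by
    rw [← List.rotate_rotate, ← List.rotate_rotate, hr]
  have h3 : b + a * (n-1) = (b - a) + a * n := by omega
  rw [h3, ← List.rotate_mod, hw, Nat.add_mul_mod_self_right] at h2
  rw [h1] at h2
  exact h2

theorem dvd_mul_pred {n j k : ℕ} (hn : 0 < n) (hjk : j ≤ k) (hk : k < n)
    (h : n ∣ (k - j) * (n - 1)) : j = k := by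
  have hcop : Nat.Coprime n (n - 1) := by
    rcases Nat.exists_eq_add_of_lt hn with ⟨m, hm⟩
    have h1 : n - 1 = m := by omega
    rw [h1, hm]
    simpa using (Nat.coprime_succ_self m).symm
  have hdj : n ∣ k - j := hcop.dvd_of_dvd_mul_right h
  rcases hdj with ⟨c2, hc2⟩
  rcases Nat.eq_zero_or_pos c2 with h2 | h2
  · rw [h2, Nat.mul_zero] at hc2; omega
  · have := Nat.le_mul_of_pos_right n h2
    omega

theorem cyc_iter_inj_single {n : ℕ} (hn : 0 < n) {w : List Bool} (hw : w.length = n)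
    (hcnt : w.count true = 1) {j k : ℕ} (hj : j < n) (hk : k < n)
    (h : cyc^[j] w = cyc^[k] w) : j = k := by
  have main : ∀ j k : ℕ, j ≤ k → k < n → cyc^[j] w = cyc^[k] w → j = k := by
    intro j k hjk hk h
    rw [cyc_iter, cyc_iter, hw] at h
    have hfix := rotate_cancel hn hw (Nat.mul_le_mul_right _ hjk) h
    have hdvd := rotate_single_true hcnt hfix
    rw [hw] at hdvd
    have hlt : (k*(n-1) - j*(n-1)) % n < n := Nat.mod_lt _ hn
    have hz : (k*(n-1) - j*(n-1)) % n = 0 := by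
      rcases hdvd with ⟨c, hc⟩
      rcases Nat.eq_zero_or_pos c with h0 | h0
      · rw [h0, Nat.mul_zero] at hc; omega
      · have := Nat.le_mul_of_pos_right n h0
        omega
    have hdd : n ∣ k*(n-1) - j*(n-1) := Nat.dvd_of_mod_eq_zero hz
    rw [← Nat.sub_mul] at hdd
    exact dvd_mul_pred hn hjk hk hdd
  rcases le_total j k with hx | hx
  · exact main j k hx hk h
  · exact (main k j hx hj h.symm).symm

theorem pair_lengths {n : ℕ} {u v : List Bool} (hu : u.length = n) (hv : v.length = n) :
    ∀ w ∈ ({u, v} : Finset (List Bool)), w.length = n := by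
  intro w hw
  rcases Finset.mem_insert.mp hw with h | h
  · rw [h]; exact hu
  · rw [Finset.mem_singleton.mp h]; exact hv

theorem reverse_lengths {n : ℕ} {e : Finset (List Bool)} (h : ∀ u ∈ e, u.length = n) :
    ∀ u ∈ e.image List.reverse, u.length = n := by
  intro u hu
  rw [Finset.mem_image] at hu
  obtain ⟨w, hw, rfl⟩ := hu
  simpa using h w hw

theorem differOne_reverse {u v : List Bool} (h : DifferOne u v) :
    DifferOne u.reverse v.reverse := by
  obtain ⟨hl, hc⟩ := h
  refine ⟨by simpa using hl, ?_⟩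
  rw [← List.reverse_zipWith hl, List.count_reverse]
  exact hc

theorem dihedral_card_n {n : ℕ} (hn : 0 < n) {u v : List Bool} (hu : u.length = n)
    (hv : v.length = n) (hd : DifferOne u v)
    (hβ : ({u, v} : Finset (List Bool)).image List.reverse ∈ cycOrbit n {u, v}) :
    (dihedralEdgeOrbit n {u, v}).card = n := by
  rw [dihedralEdgeOrbit_eq, cycOrbit_eq_of_mem hn (pair_lengths hu hv) hβ,
    Finset.union_self]
  exact cycOrbit_card hn hu hv hd

theorem dihedral_card_2n {n : ℕ} (hn : 0 < n) {u v : List Bool} (hu : u.length = n)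
    (hv : v.length = n) (hd : DifferOne u v)
    (hβ : ({u, v} : Finset (List Bool)).image List.reverse ∉ cycOrbit n {u, v}) :
    (dihedralEdgeOrbit n {u, v}).card = 2 * n := by
  rw [dihedralEdgeOrbit_eq]
  have hdisj : Disjoint (cycOrbit n {u, v})
      (cycOrbit n (({u, v} : Finset (List Bool)).image List.reverse)) := by
    rw [Finset.disjoint_left]
    intro x hx1 hx2
    apply hβ
    have e1 := cycOrbit_eq_of_mem hn (pair_lengths hu hv) hx1
    have e2 := cycOrbit_eq_of_mem hn (reverse_lengths (pair_lengths hu hv)) hx2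
    have hself := mem_cycOrbit_self hn (({u, v} : Finset (List Bool)).image List.reverse)
    rw [← e2, e1] at hself
    exact hself
  rw [Finset.card_union_of_disjoint hdisj, cycOrbit_card hn hu hv hd]
  rw [image_pair, cycOrbit_card hn (by simpa using hu) (by simpa using hv)
    (differOne_reverse hd)]
  omega

theorem mem_allBool {n : ℕ} {l : List Bool} : l ∈ allBool n ↔ l.length = n := by
  constructor
  · intro h
    rw [allBool, Finset.mem_image] at h
    obtain ⟨f, _, rfl⟩ := h
    simp
  · rintro rfl
    rw [allBool, Finset.mem_image]
    exact ⟨fun i => l.get i, Finset.mem_univ _, List.ofFn_get l⟩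

theorem mem_lucasStrings {n : ℕ} {l : List Bool} :
    l ∈ lucasStrings n ↔ l.length = n ∧ IsLucasStr l := by
  rw [lucasStrings, Finset.mem_filter, mem_allBool]

theorem mem_lucasEdges {n : ℕ} {e : Finset (List Bool)} :
    e ∈ lucasEdges n ↔ ∃ u v : List Bool, u.length = n ∧ v.length = n ∧
      IsLucasStr u ∧ IsLucasStr v ∧ DifferOne u v ∧ e = {u, v} := by
  rw [lucasEdges, Finset.mem_image]
  constructor
  · rintro ⟨⟨u, v⟩, hp, rfl⟩
    rw [Finset.mem_filter, Finset.mem_product] at hp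
    obtain ⟨⟨h1, h2⟩, h3⟩ := hp
    rw [mem_lucasStrings] at h1 h2
    exact ⟨u, v, h1.1, h2.1, h1.2, h2.2, h3, rfl⟩
  · rintro ⟨u, v, h1, h2, h3, h4, h5, rfl⟩
    refine ⟨(u, v), ?_, rfl⟩
    rw [Finset.mem_filter, Finset.mem_product, mem_lucasStrings, mem_lucasStrings]
    exact ⟨⟨⟨h1, h3⟩, ⟨h2, h4⟩⟩, h5⟩


theorem fib_replicate (k : ℕ) : IsFibStr (List.replicate k false) := by
  induction k with
  | zero => simp [IsFibStr, List.Chain']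
  | succ k ih =>
    rw [List.replicate_succ, IsFibStr, List.Chain', List.isChain_cons]
    exact ⟨fun b _ => Or.inl rfl, ih⟩

theorem lucas_rep (k : ℕ) : IsLucasStr (List.replicate k false) := by
  refine ⟨fib_replicate k, ?_⟩
  rintro ⟨h1, -⟩
  cases k with
  | zero => simp at h1
  | succ k => rw [List.replicate_succ] at h1; simp at h1

theorem getLast?_cons_rep (x : Bool) (m : ℕ) :
    (x :: List.replicate (m+1) false).getLast? = some false := by
  induction m generalizing x with
  | zero => rfl
  | succ m ih =>
    rw [List.replicate_succ, List.getLast?_cons_cons]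
    exact ih false

theorem lucas_single (m : ℕ) : IsLucasStr (true :: List.replicate (m+1) false) := by
  constructor
  · rw [IsFibStr, List.Chain', List.isChain_cons]
    refine ⟨fun b hb => ?_, fib_replicate (m+1)⟩
    · rw [List.replicate_succ] at hb
      simp at hb
      exact Or.inr hb
  · rintro ⟨-, h2⟩
    rw [getLast?_cons_rep] at h2
    simp at h2

theorem differOne_single (m : ℕ) :
    DifferOne (List.replicate (m+1) false) (true :: List.replicate m false) := by
  constructor
  · simp
  · rw [List.replicate_succ, List.zipWith_cons_cons]
    have : List.zipWith (fun a b => a != b) (List.replicate m false) (List.replicate m false)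
        = List.replicate m false := by
      induction m with
      | zero => simp
      | succ m ih => rw [List.replicate_succ, List.zipWith_cons_cons, ih]; simp
    rw [this]
    simp [List.count_cons, List.count_replicate]

theorem cyc_pred {n : ℕ} (hn : 2 ≤ n) {v : List Bool} (hv : v.length = n) :
    cyc^[n-1] v = v.rotate 1 := by
  obtain ⟨m, rfl⟩ : ∃ m, n = m + 2 := ⟨n - 2, by omega⟩
  rw [cyc_iter, hv, ← List.rotate_mod, hv]
  congr 1
  have h1 : (m + 2 - 1) * (m + 2 - 1) = 1 + m * (m + 2) := by
    have : m + 2 - 1 = m + 1 := by omega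
    rw [this]; ring
  rw [h1, Nat.add_mul_mod_self_right, Nat.mod_eq_of_lt (by omega)]

theorem exists_orbit_n {n : ℕ} (hn : 2 ≤ n) :
    ∃ e ∈ lucasEdges n, (dihedralEdgeOrbit n e).card = n := by
  obtain ⟨m, rfl⟩ : ∃ m, n = m + 2 := ⟨n - 2, by omega⟩
  set u := List.replicate (m+2) false with hu
  set v := true :: List.replicate (m+1) false with hv
  have hul : u.length = m + 2 := by simp [hu]
  have hvl : v.length = m + 2 := by simp [hv]
  have hd : DifferOne u v := differOne_single (m+1)
  refine ⟨{u, v}, ?_, ?_⟩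
  · rw [mem_lucasEdges]
    exact ⟨u, v, hul, hvl, lucas_rep (m+2), lucas_single m, hd, rfl⟩
  · apply dihedral_card_n (by omega) hul hvl hd
    rw [cycOrbit, Finset.mem_image]
    refine ⟨m + 1, Finset.mem_range.mpr (by omega), ?_⟩
    rw [image_pair, image_pair]
    have hcu : cyc^[m+1] u = u.reverse := by
      have : cyc^[m+1] u = u.rotate 1 := by
        have := cyc_pred (n := m+2) (by omega) hul
        simpa using this
      rw [this, hu, List.rotate_replicate, List.reverse_replicate]
    have hcv : cyc^[m+1] v = v.reverse := by
      have h2 : cyc^[m+1] v = v.rotate 1 := by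
        have := cyc_pred (n := m+2) (by omega) hvl
        simpa using this
      rw [h2, hv, List.rotate_cons_succ, List.rotate_zero]
      simp
    rw [hcu, hcv]

theorem exists_orbit_2n {n : ℕ} (hn : 5 ≤ n) :
    ∃ e ∈ lucasEdges n, (dihedralEdgeOrbit n e).card = 2 * n := by
  obtain ⟨m, rfl⟩ : ∃ m, n = m + 5 := ⟨n - 5, by omega⟩
  set u := true :: List.replicate (m+4) false with hu
  set v := true :: false :: true :: List.replicate (m+2) false with hv
  have hul : u.length = m + 5 := by simp [hu]
  have hvl : v.length = m + 5 := by simp [hv]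
  have hurep : u = true :: false :: false :: List.replicate (m+2) false := by
    rw [hu, List.replicate_succ, List.replicate_succ]
  have hzrep : List.zipWith (fun a b => a != b) (List.replicate (m+2) false)
      (List.replicate (m+2) false) = List.replicate (m+2) false := by
    induction (m+2) with
    | zero => simp
    | succ k ih => rw [List.replicate_succ, List.zipWith_cons_cons, ih]; simp
  have hd : DifferOne u v := by
    constructor
    · rw [hul, hvl]
    · rw [hurep, hv]
      simp only [List.zipWith_cons_cons, hzrep]
      simp [List.count_cons, List.count_replicate]
  have hcu : u.count true = 1 := by
    rw [hu]; simp [List.count_cons, List.count_replicate]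
  have hcv : v.count true = 2 := by
    rw [hv]; simp [List.count_cons, List.count_replicate]
  have hLu : IsLucasStr u := lucas_single (m+3)
  have hLv : IsLucasStr v := by
    constructor
    · rw [hv, IsFibStr, List.Chain', List.isChain_cons, List.isChain_cons]
      refine ⟨fun b hb => ?_, fun b hb => Or.inl rfl, ?_⟩
      · simp at hb
        exact Or.inr hb
      · exact (lucas_single (m+1)).1
    · rintro ⟨-, h2⟩
      rw [hv] at h2
      rw [List.getLast?_cons_cons, List.getLast?_cons_cons, getLast?_cons_rep] at h2
      simp at h2
  refine ⟨{u, v}, ?_, ?_⟩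
  · rw [mem_lucasEdges]
    exact ⟨u, v, hul, hvl, hLu, hLv, hd, rfl⟩
  · apply dihedral_card_2n (by omega) hul hvl hd
    intro hβ
    rw [cycOrbit, Finset.mem_image] at hβ
    obtain ⟨j, hj, hBe⟩ := hβ
    rw [Finset.mem_range] at hj
    rw [image_pair, image_pair] at hBe
    have hsp := pair_eq_split hBe
      (by rw [count_cyc_iter, List.count_reverse])
      (by rw [count_cyc_iter, List.count_reverse])
      (by rw [count_cyc_iter, count_cyc_iter, hcu, hcv]; omega)
    -- cyc^[j] u = u.reverse and u.reverse = cyc^[n-1] u force j = n-1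
    have hrevu : u.reverse = cyc^[m+4] u := by
      have h2 : cyc^[m+4] u = u.rotate 1 := by
        have := cyc_pred (n := m+5) (by omega) hul
        simpa using this
      rw [h2, hu, List.rotate_cons_succ, List.rotate_zero]
      simp
    have hj4 : j = m + 4 := by
      apply cyc_iter_inj_single (n := m+5) (by omega) hul hcu hj (by omega)
      rw [← hrevu]; exact hsp.1
    subst hj4
    have hsp2 : cyc^[m+4] v = v.reverse := hsp.2
    have h2 : cyc^[m+4] v = v.rotate 1 := by
      have := cyc_pred (n := m+5) (by omega) hvl
      simpa using this
    rw [h2, hv, List.rotate_cons_succ, List.rotate_zero] at hsp2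
    have hrv : (true :: false :: true :: List.replicate (m+2) false).reverse
        = List.replicate (m+2) false ++ [true, false, true] := by
      simp
    rw [hrv] at hsp2
    have hL : (false :: true :: (List.replicate (m+2) false ++ [true]))[1]? = some true := rfl
    have hR : ((List.replicate (m+2) false ++ [true, false, true]))[1]? = some false := by
      rw [List.getElem?_append_left (by simp)]
      rw [List.replicate_succ, List.replicate_succ]
      simp
    have hcontra : (some true : Option Bool) = some false := by
      rw [← hL, ← hR]
      exact congrArg (fun l => l[1]?) hsp2
    simp at hcontra


def noOneOne : List Bool → Bool
  | [] => true
  | [_] => true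
  | a :: b :: t => (!(a && b)) && noOneOne (b :: t)

theorem isFibStr_iff : ∀ l : List Bool, IsFibStr l ↔ noOneOne l = true
  | [] => by simp [IsFibStr, List.Chain', noOneOne]
  | [a] => by simp [IsFibStr, List.Chain', noOneOne]
  | a :: b :: t => by
    rw [IsFibStr, List.Chain', List.isChain_cons_cons, ← List.Chain', noOneOne, Bool.and_eq_true,
      ← IsFibStr, isFibStr_iff (b :: t)]
    constructor
    · rintro ⟨h1, h2⟩
      refine ⟨?_, h2⟩
      cases a <;> cases b <;> simp_all
    · rintro ⟨h1, h2⟩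
      refine ⟨?_, h2⟩
      cases a <;> cases b <;> simp_all

instance : DecidablePred IsFibStr := fun l =>
  decidable_of_iff _ (isFibStr_iff l).symm
instance : DecidablePred IsLucasStr := fun _ =>
  inferInstanceAs (Decidable (_ ∧ _))
instance (u v : List Bool) : Decidable (DifferOne u v) :=
  inferInstanceAs (Decidable (_ ∧ _))

theorem small1 : ∀ a b : Bool, IsLucasStr [a] → IsLucasStr [b] → DifferOne [a] [b] → False := by
  decide

theorem small2 : ∀ a b a' b' : Bool, IsLucasStr [a,b] → IsLucasStr [a',b'] →
    DifferOne [a,b] [a',b'] →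
    ∃ j < 2, ({[a,b],[a',b']} : Finset (List Bool)).image (fun w => cyc^[j] w)
      = ({[a,b],[a',b']} : Finset (List Bool)).image List.reverse := by
  decide

theorem small3 : ∀ a b c a' b' c' : Bool, IsLucasStr [a,b,c] → IsLucasStr [a',b',c'] →
    DifferOne [a,b,c] [a',b',c'] →
    ∃ j < 3, ({[a,b,c],[a',b',c']} : Finset (List Bool)).image (fun w => cyc^[j] w)
      = ({[a,b,c],[a',b',c']} : Finset (List Bool)).image List.reverse := by
  decide

theorem small4 : ∀ a b c d a' b' c' d' : Bool, IsLucasStr [a,b,c,d] → IsLucasStr [a',b',c',d'] →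
    DifferOne [a,b,c,d] [a',b',c',d'] →
    ∃ j < 4, ({[a,b,c,d],[a',b',c',d']} : Finset (List Bool)).image (fun w => cyc^[j] w)
      = ({[a,b,c,d],[a',b',c',d']} : Finset (List Bool)).image List.reverse := by
  decide

theorem lenE {l : List Bool} {n : ℕ} (h : l.length = n + 1) :
    ∃ a t, l = a :: t ∧ t.length = n := by
  cases l with
  | nil => simp at h
  | cons a t => exact ⟨a, t, rfl, by simpa using h⟩

theorem len_eq1 {l : List Bool} (h : l.length = 1) : ∃ a, l = [a] := by
  obtain ⟨a, t, rfl, ht⟩ := lenE h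
  rw [List.length_eq_zero_iff] at ht
  subst ht
  exact ⟨a, rfl⟩

theorem len_eq2 {l : List Bool} (h : l.length = 2) : ∃ a b, l = [a, b] := by
  obtain ⟨a, t, rfl, ht⟩ := lenE h
  obtain ⟨b, rfl⟩ := len_eq1 ht
  exact ⟨a, b, rfl⟩

theorem len_eq3 {l : List Bool} (h : l.length = 3) : ∃ a b c, l = [a, b, c] := by
  obtain ⟨a, t, rfl, ht⟩ := lenE h
  obtain ⟨b, c, rfl⟩ := len_eq2 ht
  exact ⟨a, b, c, rfl⟩

theorem len_eq4 {l : List Bool} (h : l.length = 4) : ∃ a b c d, l = [a, b, c, d] := by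
  obtain ⟨a, t, rfl, ht⟩ := lenE h
  obtain ⟨b, c, d, rfl⟩ := len_eq3 ht
  exact ⟨a, b, c, d, rfl⟩

/-- For `n ≥ 1`, every dihedral edge orbit of the Lucas cube `Λₙ` has size `n` or `2n`;
moreover both sizes `n` and `2n` occur as edge orbit sizes iff `n ≥ 5`. -/
theorem lucas_edge_orbit_sizes (n : ℕ) (hn : 1 ≤ n) :
    (∀ e ∈ lucasEdges n,
      (dihedralEdgeOrbit n e).card = n ∨ (dihedralEdgeOrbit n e).card = 2 * n) ∧
    (((∃ e ∈ lucasEdges n, (dihedralEdgeOrbit n e).card = n) ∧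
      (∃ e ∈ lucasEdges n, (dihedralEdgeOrbit n e).card = 2 * n)) ↔ 5 ≤ n) := by
  constructor
  · intro e he
    rw [mem_lucasEdges] at he
    obtain ⟨u, v, hu, hv, hLu, hLv, hd, rfl⟩ := he
    by_cases hβ : ({u, v} : Finset (List Bool)).image List.reverse ∈ cycOrbit n {u, v}
    · exact Or.inl (dihedral_card_n (by omega) hu hv hd hβ)
    · exact Or.inr (dihedral_card_2n (by omega) hu hv hd hβ)
  · constructor
    · rintro ⟨⟨e1, he1, hc1⟩, e2, he2, hc2⟩
      by_contra h5
      push_neg at h5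
      rw [mem_lucasEdges] at he2
      obtain ⟨u, v, hu, hv, hLu, hLv, hd, rfl⟩ := he2
      interval_cases n
      · obtain ⟨a, rfl⟩ := len_eq1 hu
        obtain ⟨b, rfl⟩ := len_eq1 hv
        exact small1 a b hLu hLv hd
      · obtain ⟨a, b, rfl⟩ := len_eq2 hu
        obtain ⟨a', b', rfl⟩ := len_eq2 hv
        have hmem : (({[a,b],[a',b']} : Finset (List Bool)).image List.reverse)
            ∈ cycOrbit 2 {[a,b],[a',b']} := by
          rw [cycOrbit, Finset.mem_image]
          obtain ⟨j, hj, heq⟩ := small2 a b a' b' hLu hLv hd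
          exact ⟨j, Finset.mem_range.mpr hj, heq⟩
        have hcard := dihedral_card_n (by omega) hu hv hd hmem
        omega
      · obtain ⟨a, b, c, rfl⟩ := len_eq3 hu
        obtain ⟨a', b', c', rfl⟩ := len_eq3 hv
        have hmem : (({[a,b,c],[a',b',c']} : Finset (List Bool)).image List.reverse)
            ∈ cycOrbit 3 {[a,b,c],[a',b',c']} := by
          rw [cycOrbit, Finset.mem_image]
          obtain ⟨j, hj, heq⟩ := small3 a b c a' b' c' hLu hLv hd
          exact ⟨j, Finset.mem_range.mpr hj, heq⟩
        have hcard := dihedral_card_n (by omega) hu hv hd hmem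
        omega
      · obtain ⟨a, b, c, d, rfl⟩ := len_eq4 hu
        obtain ⟨a', b', c', d', rfl⟩ := len_eq4 hv
        have hmem : (({[a,b,c,d],[a',b',c',d']} : Finset (List Bool)).image List.reverse)
            ∈ cycOrbit 4 {[a,b,c,d],[a',b',c',d']} := by
          rw [cycOrbit, Finset.mem_image]
          obtain ⟨j, hj, heq⟩ := small4 a b c d a' b' c' d' hLu hLv hd
          exact ⟨j, Finset.mem_range.mpr hj, heq⟩
        have hcard := dihedral_card_n (by omega) hu hv hd hmem
        omega
    · intro h5
      exact ⟨exists_orbit_n (by omega), exists_orbit_2n h5⟩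
end
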